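/- Any sequence of edge flips transforming a triangulation G on n vertices into the canonical triangulation Δₙ (with designated dominant vertices a and b) has length at least 2n - 2Δ(G) - 3, where Δ(G) is the maximum degree of G. -/

import Mathlib

open Finset

/-- An abstract combinatorial planar triangulation: a simple graph together with its
set of (triangular) faces, such that every face is a 3-clique, every edge lies on
exactly two faces, every vertex lies on a face, and Euler's relation holds. -/
structure Triangulation (V : Type*) [Fintype V] [DecidableEq V] where
  graph : SimpleGraph V
  faces : Finset (Finset V)
  face_card : ∀ f ∈ faces, f.card = 3
  face_clique : ∀ f ∈ faces, ∀ u ∈ f, ∀ v ∈ f, u ≠ v → graph.Adj u v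
  edge_faces : ∀ u v : V, graph.Adj u v → (faces.filter fun f => u ∈ f ∧ v ∈ f).card = 2
  vertex_face : ∀ v : V, ∃ f ∈ faces, v ∈ f
  euler : faces.card = 2 * Fintype.card V - 4

variable {V : Type*} [Fintype V] [DecidableEq V]

/-- Degree of a vertex. -/
noncomputable def deg (G : SimpleGraph V) (v : V) : ℕ := (G.neighborSet v).ncard

/-- A vertex adjacent to all other vertices. -/
def Dominant (G : SimpleGraph V) (v : V) : Prop := ∀ u, u ≠ v → G.Adj v u

/-- A triangle (3-cycle) of a graph. -/
def IsTriangle (G : SimpleGraph V) (t : Finset V) : Prop :=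
  t.card = 3 ∧ ∀ u ∈ t, ∀ v ∈ t, u ≠ v → G.Adj u v

/-- A separating triangle: a 3-cycle of the triangulation that is not a face. -/
def IsSepTri (T : Triangulation V) (t : Finset V) : Prop :=
  IsTriangle T.graph t ∧ t ∉ T.faces

/-- Flipping the edge `uv`, shared by the faces `uvx` and `uvy`, into the edge `xy`.
The flip is valid only when `xy` is not already an edge. -/
def FlipEdge (T T' : Triangulation V) (u v x y : V) : Prop :=
  ({u, v, x} : Finset V) ∈ T.faces ∧ ({u, v, y} : Finset V) ∈ T.faces ∧ x ≠ y ∧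
    ¬ T.graph.Adj x y ∧
    T'.graph = SimpleGraph.fromEdgeSet ((T.graph.edgeSet \ {s(u, v)}) ∪ {s(x, y)}) ∧
    T'.faces =
      insert {u, x, y} (insert {v, x, y} ((T.faces.erase {u, v, x}).erase {u, v, y}))

/-- One triangulation is obtained from another by a single edge flip. -/
def IsFlip (T T' : Triangulation V) : Prop := ∃ u v x y, FlipEdge T T' u v x y

/-- `T'` is reachable from `T` by a sequence of exactly `k` edge flips. -/
def ReachableIn (T T' : Triangulation V) (k : ℕ) : Prop :=
  ∃ L : List (Triangulation V), L.length = k ∧ List.Chain IsFlip T L ∧ L.getLastD T = T'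

section ProofAux

open Classical in
/-- The potential function: `deg a + deg b` minus an indicator of the edge `ab`. -/
noncomputable def phi (T : Triangulation V) (a b : V) : ℤ :=
  (deg T.graph a : ℤ) + (deg T.graph b : ℤ) - (if T.graph.Adj a b then 1 else 0)

omit [Fintype V] in
lemma pair_card_le {u v : V} : ({u, v} : Finset V).card ≤ 2 :=
  (Finset.card_insert_le _ _).trans (by simp)

omit [Fintype V] in
lemma card3_distinct {u v x : V} (h : ({u, v, x} : Finset V).card = 3) :
    u ≠ v ∧ u ≠ x ∧ v ≠ x := by
  refine ⟨?_, ?_, ?_⟩ <;> rintro rfl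
  · have hs : ({u, u, x} : Finset V) ⊆ {u, x} := by intro z hz; simp at hz ⊢; tauto
    have := (Finset.card_le_card hs).trans pair_card_le
    omega
  · have hs : ({u, v, u} : Finset V) ⊆ {u, v} := by intro z hz; simp at hz ⊢; tauto
    have := (Finset.card_le_card hs).trans pair_card_le
    omega
  · have hs : ({u, v, v} : Finset V) ⊆ {u, v} := by intro z hz; simp at hz ⊢; tauto
    have := (Finset.card_le_card hs).trans pair_card_le
    omega

lemma flip_phi {T T' : Triangulation V} (hf : IsFlip T T') (a b : V) (hab : a ≠ b) :
    phi T' a b ≤ phi T a b + 1 := by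
  classical
  obtain ⟨u, v, x, y, hf1, hf2, hxy, hnadj, hE, -⟩ := hf
  obtain ⟨huv, hux, hvx⟩ := card3_distinct (T.face_card _ hf1)
  obtain ⟨-, huy, hvy⟩ := card3_distinct (T.face_card _ hf2)
  have hAdjuv : T.graph.Adj u v := T.face_clique _ hf1 u (by simp) v (by simp) huv
  -- adjacency in T'
  have hadj' : ∀ p q : V, T'.graph.Adj p q ↔
      ((s(p, q) ∈ T.graph.edgeSet \ {s(u, v)} ∨ s(p, q) = s(x, y)) ∧ p ≠ q) := by
    intro p q
    rw [hE, SimpleGraph.fromEdgeSet_adj, Set.mem_union, Set.mem_singleton_iff]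
  -- neighbor set bounds
  have hdegB : ∀ w : V, w ≠ x → w ≠ y → (deg T'.graph w : ℤ) ≤ deg T.graph w := by
    intro w hwx hwy
    have hsub : T'.graph.neighborSet w ⊆ T.graph.neighborSet w := by
      intro q hq
      rw [SimpleGraph.mem_neighborSet, hadj'] at hq
      obtain ⟨h1 | h1, -⟩ := hq
      · exact h1.1
      · rw [Sym2.eq_iff] at h1
        rcases h1 with ⟨rfl, rfl⟩ | ⟨rfl, rfl⟩ <;> simp at hwx hwy
    exact_mod_cast Set.ncard_le_ncard hsub (Set.toFinite _)
  have hdegA : ∀ w : V, (deg T'.graph w : ℤ) ≤ deg T.graph w + 1 := by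
    intro w
    obtain ⟨z, hsub⟩ : ∃ z, T'.graph.neighborSet w ⊆ T.graph.neighborSet w ∪ {z} := by
      refine ⟨if w = y then x else y, ?_⟩
      intro q hq
      rw [SimpleGraph.mem_neighborSet, hadj'] at hq
      obtain ⟨h1 | h1, -⟩ := hq
      · exact Set.mem_union_left _ h1.1
      · rw [Sym2.eq_iff] at h1
        rcases h1 with ⟨h2, h3⟩ | ⟨h2, h3⟩
        · have hwy : w ≠ y := by rw [h2]; exact hxy
          rw [if_neg hwy]
          exact Set.mem_union_right _ (by simp [h3])
        · rw [if_pos h2]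
          exact Set.mem_union_right _ (by simp [h3])
    have h1 := Set.ncard_le_ncard hsub (Set.toFinite _)
    have h2 := Set.ncard_union_le (T.graph.neighborSet w) ({z} : Set V)
    have h3 : ({z} : Set V).ncard = 1 := Set.ncard_singleton z
    unfold deg
    
    omega
  by_cases hcase1 : s(a, b) = s(x, y)
  · -- the flip inserting the edge ab
    have hnadjab : ¬ T.graph.Adj a b := by
      rw [Sym2.eq_iff] at hcase1
      rcases hcase1 with ⟨rfl, rfl⟩ | ⟨rfl, rfl⟩
      · exact hnadj
      · exact fun h => hnadj h.symm
    have hadjab' : T'.graph.Adj a b := by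
      rw [hadj']
      exact ⟨Or.inr hcase1, hab⟩
    have h1 := hdegA a
    have h2 := hdegA b
    simp only [phi, if_pos hadjab', if_neg hnadjab]
    linarith
  by_cases hcase2 : s(a, b) = s(u, v)
  · -- the flip deleting the edge ab
    have habuv : (a = u ∧ b = v) ∨ (a = v ∧ b = u) := by rwa [Sym2.eq_iff] at hcase2
    have hadjab : T.graph.Adj a b := by
      rcases habuv with ⟨rfl, rfl⟩ | ⟨rfl, rfl⟩
      · exact hAdjuv
      · exact hAdjuv.symm
    have h1 : (deg T'.graph a : ℤ) ≤ deg T.graph a := by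
      rcases habuv with ⟨rfl, rfl⟩ | ⟨rfl, rfl⟩
      · exact hdegB a hux huy
      · exact hdegB a hvx hvy
    have h2 : (deg T'.graph b : ℤ) ≤ deg T.graph b := by
      rcases habuv with ⟨rfl, rfl⟩ | ⟨rfl, rfl⟩
      · exact hdegB b hvx hvy
      · exact hdegB b hux huy
    have h3 : (0 : ℤ) ≤ if T'.graph.Adj a b then 1 else 0 := by positivity
    simp only [phi, if_pos hadjab]
    linarith
  · -- a generic flip
    have hind : (if T.graph.Adj a b then (1 : ℤ) else 0) ≤
        (if T'.graph.Adj a b then (1 : ℤ) else 0) := by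
      by_cases h : T.graph.Adj a b
      · have : T'.graph.Adj a b := by
          rw [hadj']
          exact ⟨Or.inl ⟨h, by simpa using hcase2⟩, hab⟩
        simp [h, this]
      · simp only [if_neg h]
        positivity
    have hdeg : (deg T'.graph a : ℤ) + deg T'.graph b ≤
        (deg T.graph a : ℤ) + deg T.graph b + 1 := by
      by_cases ha : a = x ∨ a = y
      · have hb : b ≠ x ∧ b ≠ y := by
          constructor <;> rintro rfl
          · rcases ha with rfl | rfl
            · exact hab rfl
            · exact hcase1 ((Sym2.eq_iff).2 (Or.inr ⟨rfl, rfl⟩))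
          · rcases ha with rfl | rfl
            · exact hcase1 rfl
            · exact hab rfl
        have h1 := hdegA a
        have h2 := hdegB b hb.1 hb.2
        linarith
      · push_neg at ha
        have h1 := hdegB a ha.1 ha.2
        have h2 := hdegA b
        linarith
    simp only [phi]
    linarith

lemma chain_phi (a b : V) (hab : a ≠ b) :
    ∀ (L : List (Triangulation V)) (T : Triangulation V), List.Chain IsFlip T L →
      phi (L.getLastD T) a b ≤ phi T a b + L.length := by
  intro L
  induction L with
  | nil => intro T _; simp
  | cons T' L ih =>
    intro T hc
    unfold List.Chain at hc
    rw [List.chain_cons] at hc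
    have h1 := flip_phi hc.1 a b hab
    have h2 := ih T' hc.2
    have h3 : ((T' :: L).getLastD T) = L.getLastD T' := List.getLastD_cons
    rw [h3]
    simp only [List.length_cons]
    push_cast
    linarith

lemma deg_dominant {G : SimpleGraph V} {a : V} (h : Dominant G a) :
    deg G a = Fintype.card V - 1 := by
  have : G.neighborSet a = {a}ᶜ := by
    ext q
    simp only [SimpleGraph.mem_neighborSet, Set.mem_compl_iff, Set.mem_singleton_iff]
    constructor
    · exact fun hq => hq.ne'
    · exact fun hq => h q hq
  rw [deg, this, Set.ncard_eq_toFinset_card']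
  simp [Finset.card_compl]

end ProofAux

/-- Any sequence of edge flips transforming a triangulation `T` on `n` vertices into
the canonical triangulation (one with two distinct dominant vertices) has length at
least `2n - 2Δ(T) - 3`, where `Δ(T)` is the maximum degree of `T`. -/


theorem flips_to_canonical_lower_bound (T : Triangulation V) (k : ℕ)
    (h : ∃ T' : Triangulation V, ReachableIn T T' k ∧
        ∃ a b : V, a ≠ b ∧ Dominant T'.graph a ∧ Dominant T'.graph b) :
    2 * (Fintype.card V : ℤ)
        - 2 * (((Finset.univ.sup fun v => deg T.graph v) : ℕ) : ℤ) - 3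
      ≤ (k : ℤ) := by
  classical
  obtain ⟨T', ⟨L, hlen, hchain, hlast⟩, a, b, hab, hda, hdb⟩ := h
  set n := Fintype.card V with hn
  have hone : 1 ≤ n := by
    have : Nonempty V := ⟨a⟩
    exact Fintype.card_pos
  -- phi at the end
  have hphiend : phi T' a b = 2 * (n : ℤ) - 3 := by
    have h1 := deg_dominant hda
    have h2 := deg_dominant hdb
    rw [← hn] at h1 h2
    have h3 : T'.graph.Adj a b := (hdb a hab).symm
    simp only [phi, h1, h2, if_pos h3]
    push_cast [Nat.cast_sub hone]
    ring
  have hchainphi := chain_phi a b hab L T hchain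
  rw [hlast, hphiend, hlen] at hchainphi
  -- phi at the start is at most 2Δ
  have hda' : (deg T.graph a : ℤ) ≤ ((Finset.univ.sup fun v => deg T.graph v : ℕ) : ℤ) := by
    exact_mod_cast Finset.le_sup (Finset.mem_univ a)
  have hdb' : (deg T.graph b : ℤ) ≤ ((Finset.univ.sup fun v => deg T.graph v : ℕ) : ℤ) := by
    exact_mod_cast Finset.le_sup (Finset.mem_univ b)
  have hind : (if T.graph.Adj a b then (1 : ℤ) else 0) ≥ 0 := by positivity
  simp only [phi] at hchainphi
  linarith
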